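/- In the quadratic-loss SGD model, the region where the Pflug statistic decreases in expectation is {θ : (θ − θ*)ᵀ(V² − γM)(θ − θ*) < γσ² tr(V²)}, i.e., Δ(θ) < 0 exactly on this set, where Δ(θ) = E[∇ℓ_{n+1}ᵀ∇ℓ_n | θ_{n−1} = θ], V = E[xxᵀ] and M = E[xxᵀVxxᵀ]. In particular Δ(θ*) = −γσ² tr(V²) < 0 (provided σ² > 0 and V ≠ 0), so this region is an open set containing θ*, and if V² − γM is positive definite it is a nonempty open ellipsoid centered at θ*. -/

import Mathlib

open MeasureTheory Matrix

set_option linter.unusedSectionVars false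
set_option maxHeartbeats 1000000

section Aux
variable {p : ℕ} {μx : Measure (Fin p → ℝ)} [IsProbabilityMeasure μx]
variable {με : Measure ℝ} [IsProbabilityMeasure με]

private lemma aux_sq_int
    (hf : ∀ i j k l : Fin p, Integrable (fun x : Fin p → ℝ => x i * x j * x k * x l) μx)
    (i j : Fin p) : Integrable (fun x : Fin p → ℝ => x i * x j) μx := by
  refine ((hf i j i j).add (integrable_const 1)).mono'
    (((measurable_pi_apply i).mul (measurable_pi_apply j)).aestronglyMeasurable) ?_
  filter_upwards with x
  simp only [Pi.add_apply, Real.norm_eq_abs]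
  nlinarith [sq_nonneg (|x i * x j| - 1), sq_abs (x i * x j), abs_nonneg (x i * x j)]

private lemma aux_eint (hεint : Integrable (fun e : ℝ => e ^ 2) με) :
    Integrable (fun e : ℝ => e) με := by
  refine (hεint.add (integrable_const 1)).mono' measurable_id.aestronglyMeasurable ?_
  filter_upwards with e
  simp only [Pi.add_apply, Real.norm_eq_abs]
  nlinarith [sq_nonneg (|e| - 1), sq_abs e, abs_nonneg e]

private lemma aux_elin (hεint : Integrable (fun e : ℝ => e ^ 2) με)
    (hmean : ∫ e, e ∂με = 0) (a b : ℝ) : ∫ e, (a * e + b) ∂με = b := by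
  rw [integral_add ((aux_eint hεint).const_mul a) (integrable_const b),
    integral_const_mul, hmean, integral_const]
  simp

private lemma aux_equad {σ2 : ℝ} (hεint : Integrable (fun e : ℝ => e ^ 2) με)
    (hmean : ∫ e, e ∂με = 0) (hvar : ∫ e, e ^ 2 ∂με = σ2) (a b c : ℝ) :
    ∫ e, (a * e ^ 2 + (b * e + c)) ∂με = a * σ2 + c := by
  have h2 : Integrable (fun e : ℝ => b * e + c) με :=
    ((aux_eint hεint).const_mul b).add (integrable_const c)
  rw [integral_add (hεint.const_mul a) h2, integral_const_mul, hvar, aux_elin hεint hmean]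

private lemma aux_int_sum2 (F : Fin p → Fin p → (Fin p → ℝ) → ℝ)
    (hF : ∀ i j, Integrable (F i j) μx) :
    ∫ x, (∑ i, ∑ j, F i j x) ∂μx = ∑ i, ∑ j, ∫ x, F i j x ∂μx := by
  rw [integral_finset_sum _ (fun i _ => integrable_finset_sum _ (fun j _ => hF i j))]
  exact Finset.sum_congr rfl fun i _ => integral_finset_sum _ (fun j _ => hF i j)

private lemma aux_dd_expand (u w x : Fin p → ℝ) :
    (u ⬝ᵥ x) * (w ⬝ᵥ x) = ∑ i, ∑ j, (u i * w j) * (x i * x j) := by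
  rw [dotProduct, dotProduct, Finset.sum_mul_sum]
  exact Finset.sum_congr rfl fun i _ => Finset.sum_congr rfl fun j _ => by ring

private lemma aux_dd_int
    (hf2 : ∀ i j, Integrable (fun x : Fin p → ℝ => x i * x j) μx)
    (u w : Fin p → ℝ) : Integrable (fun x : Fin p → ℝ => (u ⬝ᵥ x) * (w ⬝ᵥ x)) μx := by
  simp only [aux_dd_expand]
  exact integrable_finset_sum _ fun i _ => integrable_finset_sum _ fun j _ =>
    (hf2 i j).const_mul _

private lemma aux_int_dd
    (V : Matrix (Fin p) (Fin p) ℝ) (hV : ∀ i j, V i j = ∫ x, x i * x j ∂μx)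
    (hf2 : ∀ i j, Integrable (fun x : Fin p → ℝ => x i * x j) μx)
    (u w : Fin p → ℝ) :
    ∫ x, (u ⬝ᵥ x) * (w ⬝ᵥ x) ∂μx = u ⬝ᵥ (V *ᵥ w) := by
  simp only [aux_dd_expand]
  rw [aux_int_sum2 _ (fun i j => (hf2 i j).const_mul _)]
  simp only [integral_const_mul, dotProduct, mulVec, Finset.mul_sum]
  exact Finset.sum_congr rfl fun i _ => Finset.sum_congr rfl fun j _ => by
    rw [← hV i j]; ring

private lemma aux_qf_expand (V : Matrix (Fin p) (Fin p) ℝ) (x : Fin p → ℝ) :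
    x ⬝ᵥ (V *ᵥ x) = ∑ k, ∑ l, V k l * (x k * x l) := by
  simp only [dotProduct, mulVec, Finset.mul_sum]
  exact Finset.sum_congr rfl fun k _ => Finset.sum_congr rfl fun l _ => by ring

private lemma aux_qf_int (V : Matrix (Fin p) (Fin p) ℝ)
    (hf2 : ∀ i j, Integrable (fun x : Fin p → ℝ => x i * x j) μx) :
    Integrable (fun x : Fin p → ℝ => x ⬝ᵥ (V *ᵥ x)) μx := by
  simp only [aux_qf_expand]
  exact integrable_finset_sum _ fun k _ => integrable_finset_sum _ fun l _ =>
    (hf2 k l).const_mul _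

private lemma aux_trace (V : Matrix (Fin p) (Fin p) ℝ)
    (hV : ∀ i j, V i j = ∫ x, x i * x j ∂μx)
    (hsym : ∀ i j, V i j = V j i)
    (hf2 : ∀ i j, Integrable (fun x : Fin p → ℝ => x i * x j) μx) :
    ∫ x, x ⬝ᵥ (V *ᵥ x) ∂μx = Matrix.trace (V * V) := by
  simp only [aux_qf_expand]
  rw [aux_int_sum2 _ (fun k l => (hf2 k l).const_mul (V k l))]
  simp only [integral_const_mul, Matrix.trace, Matrix.diag, Matrix.mul_apply]
  exact Finset.sum_congr rfl fun k _ => Finset.sum_congr rfl fun l _ => by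
    rw [← hV k l, hsym l k]

private lemma aux_quart_term_int
    (hf : ∀ i j k l : Fin p, Integrable (fun x : Fin p → ℝ => x i * x j * x k * x l) μx)
    (V : Matrix (Fin p) (Fin p) ℝ) (i j : Fin p) :
    Integrable (fun x : Fin p → ℝ => x i * x j * (x ⬝ᵥ (V *ᵥ x))) μx := by
  have h1 : (fun x : Fin p → ℝ => x i * x j * (x ⬝ᵥ (V *ᵥ x)))
      = fun x => ∑ k, ∑ l, V k l * (x i * x j * x k * x l) := by
    funext x
    rw [aux_qf_expand, Finset.mul_sum]
    exact Finset.sum_congr rfl fun k _ => by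
      rw [Finset.mul_sum]
      exact Finset.sum_congr rfl fun l _ => by ring
  rw [h1]
  exact integrable_finset_sum _ fun k _ => integrable_finset_sum _ fun l _ =>
    (hf i j k l).const_mul _

private lemma aux_quart_expand (V : Matrix (Fin p) (Fin p) ℝ) (u w x : Fin p → ℝ) :
    (u ⬝ᵥ x) * (w ⬝ᵥ x) * (x ⬝ᵥ (V *ᵥ x))
      = ∑ i, ∑ j, (u i * w j) * (x i * x j * (x ⬝ᵥ (V *ᵥ x))) := by
  rw [aux_dd_expand u w x, Finset.sum_mul]
  exact Finset.sum_congr rfl fun i _ => by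
    rw [Finset.sum_mul]
    exact Finset.sum_congr rfl fun j _ => by ring

private lemma aux_quart_int
    (hf : ∀ i j k l : Fin p, Integrable (fun x : Fin p → ℝ => x i * x j * x k * x l) μx)
    (V : Matrix (Fin p) (Fin p) ℝ) (u w : Fin p → ℝ) :
    Integrable (fun x : Fin p → ℝ => (u ⬝ᵥ x) * (w ⬝ᵥ x) * (x ⬝ᵥ (V *ᵥ x))) μx := by
  simp only [aux_quart_expand]
  exact integrable_finset_sum _ fun i _ => integrable_finset_sum _ fun j _ =>
    (aux_quart_term_int hf V i j).const_mul _

private lemma aux_int_quart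
    (hf : ∀ i j k l : Fin p, Integrable (fun x : Fin p → ℝ => x i * x j * x k * x l) μx)
    (V M : Matrix (Fin p) (Fin p) ℝ)
    (hM : ∀ i j, M i j = ∫ x, x i * x j * (x ⬝ᵥ (V *ᵥ x)) ∂μx)
    (u w : Fin p → ℝ) :
    ∫ x, (u ⬝ᵥ x) * (w ⬝ᵥ x) * (x ⬝ᵥ (V *ᵥ x)) ∂μx = u ⬝ᵥ (M *ᵥ w) := by
  simp only [aux_quart_expand]
  rw [aux_int_sum2 _ (fun i j => (aux_quart_term_int hf V i j).const_mul _)]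
  have hMw : u ⬝ᵥ (M *ᵥ w) = ∑ i, ∑ j, (u i * w j) * M i j := by
    simp only [dotProduct, mulVec, Finset.mul_sum]
    exact Finset.sum_congr rfl fun i _ => Finset.sum_congr rfl fun j _ => by ring
  rw [hMw]
  exact Finset.sum_congr rfl fun i _ => Finset.sum_congr rfl fun j _ => by
    rw [integral_const_mul, ← hM i j]

private lemma aux_int2 (V : Matrix (Fin p) (Fin p) ℝ)
    (hV : ∀ i j, V i j = ∫ x, x i * x j ∂μx)
    (hf2 : ∀ i j, Integrable (fun x : Fin p → ℝ => x i * x j) μx)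
    (c1 c2 : ℝ) (u1 w1 u2 w2 : Fin p → ℝ) :
    ∫ x, (c1 * ((u1 ⬝ᵥ x) * (w1 ⬝ᵥ x)) + c2 * ((u2 ⬝ᵥ x) * (w2 ⬝ᵥ x))) ∂μx
      = c1 * (u1 ⬝ᵥ (V *ᵥ w1)) + c2 * (u2 ⬝ᵥ (V *ᵥ w2)) := by
  have h1 : Integrable (fun x : Fin p → ℝ => c1 * ((u1 ⬝ᵥ x) * (w1 ⬝ᵥ x))) μx :=
    (aux_dd_int hf2 u1 w1).const_mul c1
  have h2 : Integrable (fun x : Fin p → ℝ => c2 * ((u2 ⬝ᵥ x) * (w2 ⬝ᵥ x))) μx :=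
    (aux_dd_int hf2 u2 w2).const_mul c2
  rw [integral_add h1 h2, integral_const_mul, integral_const_mul,
    aux_int_dd V hV hf2 u1 w1, aux_int_dd V hV hf2 u2 w2]

end Aux

private theorem pflug_closed_form
    (p : ℕ) (μx : Measure (Fin p → ℝ)) (με : Measure ℝ)
    [IsProbabilityMeasure μx] [IsProbabilityMeasure με]
    (θstar : Fin p → ℝ) (γ σ2 : ℝ) (hγ : 0 < γ)
    (hmean : ∫ e, e ∂με = 0) (hvar : ∫ e, e ^ 2 ∂με = σ2)
    (hεint : Integrable (fun e : ℝ => e ^ 2) με)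
    (hfourth : ∀ i j k l : Fin p,
      Integrable (fun x : Fin p → ℝ => x i * x j * x k * x l) μx)
    (V M : Matrix (Fin p) (Fin p) ℝ)
    (hV : ∀ i j, V i j = ∫ x, x i * x j ∂μx)
    (hM : ∀ i j, M i j = ∫ x, x i * x j * (x ⬝ᵥ (V *ᵥ x)) ∂μx)
    (g : (Fin p → ℝ) → (Fin p → ℝ) → ℝ → Fin p → ℝ)
    (hg : ∀ θ x e, g θ x e = -(((x ⬝ᵥ θstar + e) - x ⬝ᵥ θ) • x))
    (Δ : (Fin p → ℝ) → ℝ)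
    (hΔ : ∀ θ, Δ θ = ∫ x₁, ∫ e₁, ∫ x₂, ∫ e₂,
      g (θ - γ • g θ x₁ e₁) x₂ e₂ ⬝ᵥ g θ x₁ e₁ ∂με ∂μx ∂με ∂μx) (θ : Fin p → ℝ) :
    Δ θ = (θ - θstar) ⬝ᵥ ((V * V - γ • M) *ᵥ (θ - θstar))
      - γ * σ2 * Matrix.trace (V * V) := by
  have hf2 : ∀ i j, Integrable (fun x : Fin p → ℝ => x i * x j) μx := aux_sq_int hfourth
  have key : ∀ (x₁ : Fin p → ℝ) (e₁ : ℝ) (x₂ : Fin p → ℝ) (e₂ : ℝ),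
      g (θ - γ • g θ x₁ e₁) x₂ e₂ ⬝ᵥ g θ x₁ e₁
        = ((x₁ ⬝ᵥ θstar + e₁ - x₁ ⬝ᵥ θ) * (x₂ ⬝ᵥ x₁)) * e₂ +
          ((x₂ ⬝ᵥ θstar - x₂ ⬝ᵥ θ) * ((x₁ ⬝ᵥ θstar + e₁ - x₁ ⬝ᵥ θ) * (x₂ ⬝ᵥ x₁))
            - γ * ((x₁ ⬝ᵥ θstar + e₁ - x₁ ⬝ᵥ θ) * (x₂ ⬝ᵥ x₁)) ^ 2) := by
    intro x₁ e₁ x₂ e₂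
    simp only [hg, smul_neg, sub_neg_eq_add, dotProduct_add, dotProduct_sub,
      add_dotProduct, sub_dotProduct, dotProduct_smul, smul_dotProduct,
      neg_dotProduct, dotProduct_neg, smul_eq_mul, smul_smul, neg_neg]
    ring
  have step3 : ∀ (b : ℝ) (x₁ x₂ : Fin p → ℝ),
      (x₂ ⬝ᵥ θstar - x₂ ⬝ᵥ θ) * (b * (x₂ ⬝ᵥ x₁)) - γ * (b * (x₂ ⬝ᵥ x₁)) ^ 2
        = (-b) * (((θ - θstar) ⬝ᵥ x₂) * (x₁ ⬝ᵥ x₂))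
          + (-(γ * b ^ 2)) * ((x₁ ⬝ᵥ x₂) * (x₁ ⬝ᵥ x₂)) := by
    intro b x₁ x₂
    rw [sub_dotProduct, dotProduct_comm θ x₂, dotProduct_comm θstar x₂,
      dotProduct_comm x₁ x₂]
    ring
  have step4 : ∀ (q r D E e₁ : ℝ),
      (-(q + e₁ - r)) * D + (-(γ * (q + e₁ - r) ^ 2)) * E
        = (-(γ * E)) * e₁ ^ 2 + ((-D - 2 * γ * (q - r) * E) * e₁
            + ((r - q) * D - γ * (q - r) ^ 2 * E)) := by
    intros; ring
  rw [hΔ θ]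
  simp only [key]
  simp only [aux_elin hεint hmean]
  simp only [step3]
  simp only [aux_int2 V hV hf2]
  simp only [step4]
  simp only [aux_equad hεint hmean hvar]
  have hsym : ∀ i j, V i j = V j i := fun i j => by
    rw [hV i j, hV j i]
    exact integral_congr_ae (Filter.Eventually.of_forall fun x => mul_comm _ _)
  have hswap : (θ - θstar) ᵥ* V = V *ᵥ (θ - θstar) := by
    funext i
    simp only [vecMul, mulVec, dotProduct]
    exact Finset.sum_congr rfl fun j _ => by rw [hsym j i]; ring
  have step5 : ∀ x₁ : Fin p → ℝ,
      -(γ * (x₁ ⬝ᵥ (V *ᵥ x₁))) * σ2 +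
        ((x₁ ⬝ᵥ θ - x₁ ⬝ᵥ θstar) * ((θ - θstar) ⬝ᵥ (V *ᵥ x₁))
          - γ * (x₁ ⬝ᵥ θstar - x₁ ⬝ᵥ θ) ^ 2 * (x₁ ⬝ᵥ (V *ᵥ x₁)))
        = ((θ - θstar) ⬝ᵥ x₁) * (((θ - θstar) ᵥ* V) ⬝ᵥ x₁)
          + ((-γ) * (((θ - θstar) ⬝ᵥ x₁) * ((θ - θstar) ⬝ᵥ x₁) * (x₁ ⬝ᵥ (V *ᵥ x₁)))
            + (-(γ * σ2)) * (x₁ ⬝ᵥ (V *ᵥ x₁))) := by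
    intro x₁
    rw [dotProduct_mulVec (θ - θstar) V x₁, sub_dotProduct θ θstar x₁,
      dotProduct_comm θ x₁, dotProduct_comm θstar x₁]
    ring
  have int1 : Integrable
      (fun x₁ : Fin p → ℝ => ((θ - θstar) ⬝ᵥ x₁) * (((θ - θstar) ᵥ* V) ⬝ᵥ x₁)) μx :=
    aux_dd_int hf2 _ _
  have int2 : Integrable (fun x₁ : Fin p → ℝ =>
      (-γ) * (((θ - θstar) ⬝ᵥ x₁) * ((θ - θstar) ⬝ᵥ x₁) * (x₁ ⬝ᵥ (V *ᵥ x₁)))) μx :=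
    (aux_quart_int hfourth V _ _).const_mul _
  have int3 : Integrable (fun x₁ : Fin p → ℝ =>
      (-(γ * σ2)) * (x₁ ⬝ᵥ (V *ᵥ x₁))) μx :=
    (aux_qf_int V hf2).const_mul _
  have int23 : Integrable (fun x₁ : Fin p → ℝ =>
      (-γ) * (((θ - θstar) ⬝ᵥ x₁) * ((θ - θstar) ⬝ᵥ x₁) * (x₁ ⬝ᵥ (V *ᵥ x₁)))
        + (-(γ * σ2)) * (x₁ ⬝ᵥ (V *ᵥ x₁))) μx := int2.add int3
  simp only [step5]
  rw [integral_add int1 int23, integral_add int2 int3, integral_const_mul,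
    integral_const_mul, aux_int_dd V hV hf2, aux_int_quart hfourth V M hM,
    aux_trace V hV hsym hf2, hswap, mulVec_mulVec, sub_mulVec, dotProduct_sub,
    smul_mulVec, dotProduct_smul, smul_eq_mul]
  ring


theorem pflug_region_quadratic
    (p : ℕ) (μx : Measure (Fin p → ℝ)) (με : Measure ℝ)
    [IsProbabilityMeasure μx] [IsProbabilityMeasure με]
    (θstar : Fin p → ℝ) (γ σ2 : ℝ) (hγ : 0 < γ)
    (hmean : ∫ e, e ∂με = 0) (hvar : ∫ e, e ^ 2 ∂με = σ2)
    (hεint : Integrable (fun e : ℝ => e ^ 2) με)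
    (hfourth : ∀ i j k l : Fin p,
      Integrable (fun x : Fin p → ℝ => x i * x j * x k * x l) μx)
    (V M : Matrix (Fin p) (Fin p) ℝ)
    (hV : ∀ i j, V i j = ∫ x, x i * x j ∂μx)
    (hM : ∀ i j, M i j = ∫ x, x i * x j * (x ⬝ᵥ (V *ᵥ x)) ∂μx)
    -- gradient of the quadratic loss: ∇ℓ = -(y - xᵀθ) x with y = xᵀθ* + e
    (g : (Fin p → ℝ) → (Fin p → ℝ) → ℝ → Fin p → ℝ)
    (hg : ∀ θ x e, g θ x e = -(((x ⬝ᵥ θstar + e) - x ⬝ᵥ θ) • x))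
    -- Δ(θ) = E[∇ℓ_{n+1}ᵀ∇ℓ_n | θ_{n-1} = θ], with θ_n = θ - γ ∇ℓ_n
    (Δ : (Fin p → ℝ) → ℝ)
    (hΔ : ∀ θ, Δ θ = ∫ x₁, ∫ e₁, ∫ x₂, ∫ e₂,
      g (θ - γ • g θ x₁ e₁) x₂ e₂ ⬝ᵥ g θ x₁ e₁ ∂με ∂μx ∂με ∂μx) :
    -- the region where the diagnostic decreases in expectation
    {θ : Fin p → ℝ | Δ θ < 0}
      = {θ : Fin p → ℝ |
          (θ - θstar) ⬝ᵥ ((V * V - γ • M) *ᵥ (θ - θstar))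
            < γ * σ2 * Matrix.trace (V * V)} ∧
    -- value at the truth
    Δ θstar = -(γ * σ2 * Matrix.trace (V * V)) ∧
    (0 < σ2 → V ≠ 0 → Δ θstar < 0) ∧
    -- it is an open set, containing θ* when σ² > 0 and V ≠ 0
    IsOpen {θ : Fin p → ℝ | Δ θ < 0} ∧
    (0 < σ2 → V ≠ 0 → θstar ∈ {θ : Fin p → ℝ | Δ θ < 0}) ∧
    -- a nonempty (open) ellipsoid centered at θ* when V² - γM is pos. def.
    ((V * V - γ • M).PosDef → 0 < σ2 → V ≠ 0 →
      Set.Nonempty {θ : Fin p → ℝ | Δ θ < 0} ∧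
      Bornology.IsBounded {θ : Fin p → ℝ | Δ θ < 0} ∧
      (∀ v : Fin p → ℝ,
        θstar + v ∈ {θ : Fin p → ℝ | Δ θ < 0}
          ↔ θstar - v ∈ {θ : Fin p → ℝ | Δ θ < 0})) := by
  have hclosed : ∀ θ, Δ θ = (θ - θstar) ⬝ᵥ ((V * V - γ • M) *ᵥ (θ - θstar))
      - γ * σ2 * Matrix.trace (V * V) := fun θ =>
    pflug_closed_form p μx με θstar γ σ2 hγ hmean hvar hεint hfourth V M hV hM g hg Δ hΔ θ
  have hmem : ∀ θ, Δ θ < 0 ↔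
      (θ - θstar) ⬝ᵥ ((V * V - γ • M) *ᵥ (θ - θstar))
        < γ * σ2 * Matrix.trace (V * V) := by
    intro θ; rw [hclosed θ]; exact sub_neg
  have hseteq : {θ : Fin p → ℝ | Δ θ < 0}
      = {θ : Fin p → ℝ | (θ - θstar) ⬝ᵥ ((V * V - γ • M) *ᵥ (θ - θstar))
          < γ * σ2 * Matrix.trace (V * V)} := Set.ext fun θ => hmem θ
  have hΔstar : Δ θstar = -(γ * σ2 * Matrix.trace (V * V)) := by
    rw [hclosed θstar]
    simp
  have hsym : ∀ i j, V i j = V j i := fun i j => by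
    rw [hV i j, hV j i]
    exact integral_congr_ae (Filter.Eventually.of_forall fun x => mul_comm _ _)
  have htr : V ≠ 0 → 0 < Matrix.trace (V * V) := by
    intro hVne
    have htreq : Matrix.trace (V * V) = ∑ i, ∑ j, (V i j) ^ 2 := by
      simp only [Matrix.trace, Matrix.diag, Matrix.mul_apply]
      exact Finset.sum_congr rfl fun i _ => Finset.sum_congr rfl fun j _ => by
        rw [hsym j i]; ring
    obtain ⟨i, j, hij⟩ : ∃ i j, V i j ≠ 0 := by
      by_contra h
      push_neg at h
      exact hVne (by ext i j; simpa using h i j)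
    rw [htreq]
    refine Finset.sum_pos' (fun i _ => Finset.sum_nonneg fun j _ => sq_nonneg _)
      ⟨i, Finset.mem_univ i,
        Finset.sum_pos' (fun j _ => sq_nonneg _)
          ⟨j, Finset.mem_univ j, by positivity⟩⟩
  have hΔstarneg : 0 < σ2 → V ≠ 0 → Δ θstar < 0 := by
    intro hσ hVne
    rw [hΔstar]
    exact neg_lt_zero.mpr (mul_pos (mul_pos hγ hσ) (htr hVne))
  have hopen : IsOpen {θ : Fin p → ℝ | Δ θ < 0} := by
    rw [hseteq]
    have hQcont : Continuous fun θ : Fin p → ℝ =>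
        (θ - θstar) ⬝ᵥ ((V * V - γ • M) *ᵥ (θ - θstar)) := by
      simp only [dotProduct, mulVec, Pi.sub_apply]
      refine continuous_finset_sum _ fun i _ =>
        Continuous.mul ((continuous_apply i).sub continuous_const) ?_
      exact continuous_finset_sum _ fun j _ =>
        continuous_const.mul ((continuous_apply j).sub continuous_const)
    exact isOpen_lt hQcont continuous_const
  refine ⟨hseteq, hΔstar, hΔstarneg, hopen, fun hσ hVne => hΔstarneg hσ hVne, ?_⟩
  intro hPD hσ hVne
  have hcpos : 0 < γ * σ2 * Matrix.trace (V * V) :=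
    mul_pos (mul_pos hγ hσ) (htr hVne)
  refine ⟨⟨θstar, hΔstarneg hσ hVne⟩, ?_, ?_⟩
  · -- boundedness
    by_cases hp0 : p = 0
    · subst hp0
      refine (Metric.isBounded_closedBall (x := (0 : Fin 0 → ℝ)) (r := 0)).subset ?_
      intro θ _
      have hθ0 : θ = 0 := Subsingleton.elim θ 0
      simp [Metric.mem_closedBall, hθ0]
    · haveI : Nonempty (Fin p) := ⟨⟨0, Nat.pos_of_ne_zero hp0⟩⟩
      have hQc : Continuous fun v : Fin p → ℝ => v ⬝ᵥ ((V * V - γ • M) *ᵥ v) := by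
        simp only [dotProduct, mulVec]
        refine continuous_finset_sum _ fun i _ =>
          Continuous.mul (continuous_apply i) ?_
        exact continuous_finset_sum _ fun j _ =>
          continuous_const.mul (continuous_apply j)
      have hsphne : (Metric.sphere (0 : Fin p → ℝ) 1).Nonempty := by
        refine ⟨fun _ => 1, ?_⟩
        simp [Metric.mem_sphere, dist_zero_right]
      obtain ⟨w, hwS, hwmin⟩ := (isCompact_sphere (0 : Fin p → ℝ) 1).exists_isMinOn
        hsphne hQc.continuousOn
      have hw1 : ‖w‖ = 1 := by simpa [dist_zero_right] using Metric.mem_sphere.mp hwS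
      have hw0 : w ≠ 0 := fun h => by simp [h] at hw1
      have hm : 0 < w ⬝ᵥ ((V * V - γ • M) *ᵥ w) := by
        simpa using (posDef_iff_dotProduct_mulVec.mp hPD).2 hw0
      have hcoer : ∀ v : Fin p → ℝ,
          (w ⬝ᵥ ((V * V - γ • M) *ᵥ w)) * ‖v‖ ^ 2 ≤ v ⬝ᵥ ((V * V - γ • M) *ᵥ v) := by
        intro v
        rcases eq_or_ne v 0 with rfl | hv
        · simp
        · have hnv : 0 < ‖v‖ := norm_pos_iff.mpr hv
          have hwv : ‖v‖⁻¹ • v ∈ Metric.sphere (0 : Fin p → ℝ) 1 := by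
            simp [Metric.mem_sphere, dist_zero_right, norm_smul, abs_inv,
              inv_mul_cancel₀ hnv.ne']
          have hle : w ⬝ᵥ ((V * V - γ • M) *ᵥ w)
              ≤ (‖v‖⁻¹ • v) ⬝ᵥ ((V * V - γ • M) *ᵥ (‖v‖⁻¹ • v)) := hwmin hwv
          have hQs : (‖v‖⁻¹ • v) ⬝ᵥ ((V * V - γ • M) *ᵥ (‖v‖⁻¹ • v))
              = ‖v‖⁻¹ * (‖v‖⁻¹ * (v ⬝ᵥ ((V * V - γ • M) *ᵥ v))) := by
            rw [mulVec_smul, dotProduct_smul, smul_dotProduct]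
            simp [smul_eq_mul]
          rw [hQs] at hle
          have h2 := mul_le_mul_of_nonneg_right hle (sq_nonneg ‖v‖)
          calc (w ⬝ᵥ ((V * V - γ • M) *ᵥ w)) * ‖v‖ ^ 2
              ≤ (‖v‖⁻¹ * (‖v‖⁻¹ * (v ⬝ᵥ ((V * V - γ • M) *ᵥ v)))) * ‖v‖ ^ 2 := h2
            _ = (‖v‖⁻¹ * ‖v‖) * ((‖v‖⁻¹ * ‖v‖) * (v ⬝ᵥ ((V * V - γ • M) *ᵥ v))) := by
                ring
            _ = v ⬝ᵥ ((V * V - γ • M) *ᵥ v) := by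
                rw [inv_mul_cancel₀ hnv.ne']; ring
      refine (Metric.isBounded_closedBall (x := θstar)
        (r := Real.sqrt ((γ * σ2 * Matrix.trace (V * V)) / (w ⬝ᵥ ((V * V - γ • M) *ᵥ w))))).subset ?_
      intro θ hθ
      rw [Set.mem_setOf_eq, hmem] at hθ
      have h1 : ‖θ - θstar‖ ^ 2
          ≤ (γ * σ2 * Matrix.trace (V * V)) / (w ⬝ᵥ ((V * V - γ • M) *ᵥ w)) := by
        rw [le_div_iff₀ hm]
        calc ‖θ - θstar‖ ^ 2 * (w ⬝ᵥ ((V * V - γ • M) *ᵥ w))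
            = (w ⬝ᵥ ((V * V - γ • M) *ᵥ w)) * ‖θ - θstar‖ ^ 2 := mul_comm _ _
          _ ≤ (θ - θstar) ⬝ᵥ ((V * V - γ • M) *ᵥ (θ - θstar)) := hcoer _
          _ ≤ γ * σ2 * Matrix.trace (V * V) := le_of_lt hθ
      rw [Metric.mem_closedBall, dist_eq_norm]
      calc ‖θ - θstar‖ = Real.sqrt (‖θ - θstar‖ ^ 2) :=
            (Real.sqrt_sq (norm_nonneg _)).symm
        _ ≤ _ := Real.sqrt_le_sqrt h1
  · intro v
    rw [Set.mem_setOf_eq, Set.mem_setOf_eq, hmem, hmem,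
      add_sub_cancel_left, sub_sub_cancel_left, mulVec_neg, dotProduct_neg,
      neg_dotProduct, neg_neg]
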